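/- Let A ∈ {±1}^{2^n × n} be the sign matrix whose rows enumerate all 2^n sign vectors in {±1}^n, and suppose there exist vectors v_1,...,v_n ∈ R^d such that for every row i there is u_i ∈ R^d with |{j ∈ [n] : sign⟨u_i, v_j⟩ ≠ A_{i,j}}| ≤ εn, where ε < 1/2. Then C(n,≤d) · C(n,≤⌊εn⌋) ≥ 2^n, where C(n,≤k) := Σ_{j=0}^{k} C(n,j). -/

import Mathlib

open scoped RealInnerProductSpace
open scoped Classical

noncomputable def Rsign (x : ℝ) : ℝ := if 0 < x then 1 else -1

lemma card_small_sets (n k : ℕ) :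
    ((Finset.univ : Finset (Finset (Fin n))).filter (fun E => E.card ≤ k)).card
      = ∑ j ∈ Finset.range (k + 1), n.choose j := by
  have h : ((Finset.univ : Finset (Finset (Fin n))).filter (fun E => E.card ≤ k))
      = (Finset.range (k + 1)).biUnion (fun j => Finset.powersetCard j Finset.univ) := by
    ext E
    simp only [Finset.mem_filter, Finset.mem_univ, true_and, Finset.mem_biUnion,
      Finset.mem_range, Finset.mem_powersetCard_univ]
    constructor
    · intro h; exact ⟨E.card, Nat.lt_succ_of_le h, rfl⟩
    · rintro ⟨j, hj, rfl⟩; omega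
  rw [h, Finset.card_biUnion]
  · refine Finset.sum_congr rfl fun j _ => ?_
    rw [Finset.card_powersetCard, Finset.card_univ, Fintype.card_fin]
  · intro a _ b _ hab
    simp only [Finset.disjoint_left, Finset.mem_powersetCard_univ]
    rintro E rfl h; exact hab h

lemma no_pos_relation {n d : ℕ} (v : Fin n → EuclideanSpace ℝ (Fin d))
    (F : Finset (Finset (Fin n)))
    (hFmem : ∀ P ∈ F, ∃ u : EuclideanSpace ℝ (Fin d), ∀ j, j ∈ P ↔ 0 < ⟪u, v j⟫)
    (s : Finset (Fin n)) (hs : F.Shatters s)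
    (c : {x // x ∈ s} → ℝ) (hsum : ∑ j, c j • v j = 0) (hpos : ∃ j, 0 < c j) : False := by
  classical
  set t : Finset (Fin n) := (Finset.univ.filter fun j : {x // x ∈ s} => 0 < c j).image Subtype.val with ht
  have hts : t ⊆ s := by
    intro j hj
    simp only [ht, Finset.mem_image, Finset.mem_filter] at hj
    obtain ⟨x, _, rfl⟩ := hj
    exact x.2
  obtain ⟨P, hPF, hsp⟩ := hs hts
  obtain ⟨u, hu⟩ := hFmem P hPF
  have h0 : ∑ j : {x // x ∈ s}, c j * ⟪u, v j⟫ = 0 := by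
    have h1 : ⟪u, ∑ j : {x // x ∈ s}, c j • v (j : Fin n)⟫ = 0 := by
      rw [hsum, inner_zero_right]
    rw [inner_sum] at h1
    simp only [real_inner_smul_right] at h1
    exact h1
  have hterm : ∀ j : {x // x ∈ s}, 0 ≤ c j * ⟪u, v (j : Fin n)⟫ := by
    intro j
    rcases lt_trichotomy (c j) 0 with h | h | h
    · have hjt : (j : Fin n) ∉ t := by
        simp only [ht, Finset.mem_image, Finset.mem_filter, Finset.mem_univ, true_and]
        rintro ⟨x, hx, hxj⟩
        have : x = j := Subtype.ext hxj
        rw [this] at hx; linarith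
      have hjP : (j : Fin n) ∉ P := fun hP => hjt (hsp ▸ Finset.mem_inter.2 ⟨j.2, hP⟩)
      have : ¬ (0 < ⟪u, v (j : Fin n)⟫) := fun hc => hjP ((hu _).2 hc)
      nlinarith [not_lt.1 this]
    · simp [h]
    · have hjt : (j : Fin n) ∈ t := by
        simp only [ht, Finset.mem_image, Finset.mem_filter, Finset.mem_univ, true_and]
        exact ⟨j, h, rfl⟩
      have hjP : (j : Fin n) ∈ P := (Finset.mem_inter.1 (hsp ▸ hjt)).2
      have := (hu _).1 hjP
      nlinarith
  obtain ⟨j0, hj0⟩ := hpos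
  have hj0' : 0 < c j0 * ⟪u, v (j0 : Fin n)⟫ := by
    have hjt : (j0 : Fin n) ∈ t := by
      simp only [ht, Finset.mem_image, Finset.mem_filter, Finset.mem_univ, true_and]
      exact ⟨j0, hj0, rfl⟩
    have hjP : (j0 : Fin n) ∈ P := (Finset.mem_inter.1 (hsp ▸ hjt)).2
    have := (hu _).1 hjP
    nlinarith
  have : 0 < ∑ j : {x // x ∈ s}, c j * ⟪u, v (j : Fin n)⟫ :=
    Finset.sum_pos' (fun j _ => hterm j) ⟨j0, Finset.mem_univ _, hj0'⟩
  linarith [h0, this]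

theorem stmt9 (n d : ℕ) (ε : ℝ) (hε : ε < 1 / 2)
    (A : Matrix (Fin (2 ^ n)) (Fin n) ℝ)
    (hA : ∀ g : Fin n → ℝ, (∀ j, g j = 1 ∨ g j = -1) → ∃ i, ∀ j, A i j = g j)
    (hA' : ∀ i j, A i j = 1 ∨ A i j = -1)
    (v : Fin n → EuclideanSpace ℝ (Fin d))
    (hrep : ∀ i, ∃ u : EuclideanSpace ℝ (Fin d),
      ((Finset.univ.filter fun j => Rsign ⟪u, v j⟫ ≠ A i j).card : ℝ) ≤ ε * n) :
    2 ^ n ≤ (∑ j ∈ Finset.range (d + 1), n.choose j) *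
      (∑ j ∈ Finset.range (⌊ε * (n : ℝ)⌋₊ + 1), n.choose j) := by
  classical
  set k := ⌊ε * (n : ℝ)⌋₊ with hk
  set F : Finset (Finset (Fin n)) := Finset.univ.filter
    (fun P => ∃ u : EuclideanSpace ℝ (Fin d), ∀ j, j ∈ P ↔ 0 < ⟪u, v j⟫) with hF
  have hFmem : ∀ P ∈ F, ∃ u : EuclideanSpace ℝ (Fin d), ∀ j, j ∈ P ↔ 0 < ⟪u, v j⟫ := by
    intro P hP; exact (Finset.mem_filter.1 hP).2
  -- VC dimension bound
  have hvc : F.vcDim ≤ d := by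
    rw [Finset.vcDim]
    apply Finset.sup_le
    intro s hs
    rw [Finset.mem_shatterer] at hs
    by_contra hlt
    push_neg at hlt
    have hdep : ¬ LinearIndependent ℝ (fun j : {x // x ∈ s} => v j) := by
      intro h
      have h2 := h.fintype_card_le_finrank
      rw [Fintype.card_coe, finrank_euclideanSpace, Fintype.card_fin] at h2
      omega
    obtain ⟨c, hsum, i0, hi0⟩ := Fintype.not_linearIndependent_iff.1 hdep
    rcases lt_or_gt_of_ne hi0 with h | h
    · refine no_pos_relation v F hFmem s hs (fun j => -c j) ?_ ⟨i0, show 0 < -c i0 by linarith⟩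
      have : ∑ j : {x // x ∈ s}, -c j • v (j : Fin n) = -∑ j : {x // x ∈ s}, c j • v (j : Fin n) := by
        rw [← Finset.sum_neg_distrib]
        exact Finset.sum_congr rfl fun j _ => by rw [neg_smul]
      rw [this, hsum, neg_zero]
    · exact no_pos_relation v F hFmem s hs c hsum ⟨i0, h⟩
  have hcardF : F.card ≤ ∑ j ∈ Finset.range (d + 1), n.choose j := by
    calc F.card ≤ F.shatterer.card := Finset.card_le_card_shatterer F
      _ ≤ ∑ j ∈ Finset.Iic F.vcDim, (Fintype.card (Fin n)).choose j :=
          Finset.card_shatterer_le_sum_vcDim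
      _ ≤ ∑ j ∈ Finset.range (d + 1), n.choose j := by
          simp only [Fintype.card_fin]
          have hIr : Finset.range (d + 1) = Finset.Iic d := by
            ext x; simp [Nat.lt_succ_iff]
          rw [hIr]
          exact Finset.sum_le_sum_of_subset (Finset.Iic_subset_Iic.2 hvc)
  -- injection
  have key : ∀ s : Finset (Fin n), ∃ P E : Finset (Fin n), P ∈ F ∧ E.card ≤ k ∧
      ∀ j, (j ∈ s ↔ (j ∈ P ↔ j ∉ E)) := by
    intro s
    obtain ⟨i, hi⟩ := hA (fun j => if j ∈ s then 1 else -1)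
      (fun j => by by_cases h : j ∈ s <;> simp [h])
    obtain ⟨u, hu⟩ := hrep i
    refine ⟨Finset.univ.filter (fun j => 0 < ⟪u, v j⟫),
            Finset.univ.filter (fun j => Rsign ⟪u, v j⟫ ≠ A i j), ?_, Nat.le_floor hu, ?_⟩
    · rw [hF, Finset.mem_filter]
      exact ⟨Finset.mem_univ _, u, fun j => by simp⟩
    · intro j
      have hij := hi j
      simp only [Finset.mem_filter, Finset.mem_univ, true_and]
      rw [hij]
      simp only [Rsign]
      by_cases hs' : j ∈ s <;> by_cases hp : 0 < ⟪u, v j⟫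
      · rw [if_pos hs', if_pos hp]
        exact iff_of_true hs' ⟨fun _ => by norm_num, fun _ => hp⟩
      · rw [if_pos hs', if_neg hp]
        exact iff_of_true hs'
          ⟨fun h => absurd h hp, fun h => absurd (by norm_num : ((-1 : ℝ) ≠ 1)) h⟩
      · rw [if_neg hs', if_pos hp]
        exact iff_of_false hs' (fun h => h.1 hp (by norm_num))
      · rw [if_neg hs', if_neg hp]
        exact iff_of_false hs' (fun h => hp (h.2 (by norm_num)))
  choose P E hP hE hiff using key
  have hinj : ∀ a ∈ (Finset.univ : Finset (Finset (Fin n))), ∀ b ∈ Finset.univ,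
      (P a, E a) = (P b, E b) → a = b := by
    intro a _ b _ hab
    simp only [Prod.mk.injEq] at hab
    ext j
    rw [hiff a j, hiff b j, hab.1, hab.2]
  have hle : 2 ^ n ≤ F.card *
      ((Finset.univ : Finset (Finset (Fin n))).filter (fun E' => E'.card ≤ k)).card := by
    have hmaps : ∀ s ∈ (Finset.univ : Finset (Finset (Fin n))), (P s, E s) ∈
        F ×ˢ ((Finset.univ : Finset (Finset (Fin n))).filter (fun E' => E'.card ≤ k)) := by
      intro s _
      exact Finset.mem_product.2 ⟨hP s, Finset.mem_filter.2 ⟨Finset.mem_univ _, hE s⟩⟩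
    have := Finset.card_le_card_of_injOn (fun s => (P s, E s)) hmaps hinj
    rw [Finset.card_product, Finset.card_univ, Fintype.card_finset, Fintype.card_fin] at this
    exact this
  calc 2 ^ n ≤ _ := hle
    _ ≤ _ := Nat.mul_le_mul hcardF (le_of_eq (card_small_sets n k))
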